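/- For every positive integer N, the group GL_N(ℤ) is finitely generated: there exists a finite subset S of GL_N(ℤ) such that the subgroup generated by S is all of GL_N(ℤ). -/

import Mathlib

open Matrix

namespace Stmt14

variable {N : ℕ}

/-- generating set: GL elements with all entries of absolute value ≤ 1 -/
def T (N : ℕ) : Set (GL (Fin N) ℤ) := {g | ∀ i j, ((g : Matrix (Fin N) (Fin N) ℤ) i j).natAbs ≤ 1}

lemma T_finite (N : ℕ) : (T N).Finite := by
  have h1 : Set.Finite ((fun (g : GL (Fin N) ℤ) (i j : Fin N) => (g : Matrix (Fin N) (Fin N) ℤ) i j) '' T N) := by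
    apply Set.Finite.subset (Set.Finite.pi (fun i => Set.Finite.pi (fun j => Set.finite_Icc (-1 : ℤ) 1)))
    rintro f ⟨g, hg, rfl⟩
    intro i _
    intro j _
    have := hg i j
    simp only [Set.mem_Icc]
    omega
  refine Set.Finite.of_finite_image h1 ?_
  intro a _ b _ h
  exact Units.ext (Matrix.ext fun i j => congrFun (congrFun h i) j)

/-- transvection as a unit -/
def tv (i j : Fin N) (hij : i ≠ j) (c : ℤ) : GL (Fin N) ℤ :=
  ⟨transvection i j c, transvection i j (-c),
   by rw [transvection_mul_transvection_same _ _ hij, add_neg_cancel, transvection_zero],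
   by rw [transvection_mul_transvection_same _ _ hij, neg_add_cancel, transvection_zero]⟩

lemma tv_mul (i j : Fin N) (hij : i ≠ j) (c d : ℤ) :
    tv i j hij c * tv i j hij d = tv i j hij (c + d) :=
  Units.ext (transvection_mul_transvection_same _ _ hij c d)

lemma tv_one_mem (i j : Fin N) (hij : i ≠ j) : tv i j hij 1 ∈ T N := by
  intro a b
  simp only [tv, transvection, Matrix.add_apply, Matrix.one_apply, Matrix.single, Matrix.of_apply]
  rcases eq_or_ne a b with rfl | hab
  · rw [if_pos rfl, if_neg (fun h => hij (h.1.trans h.2.symm))]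
    simp
  · rw [if_neg hab]
    split_ifs <;> simp

lemma tv_inv (i j : Fin N) (hij : i ≠ j) (c : ℤ) :
    (tv i j hij c)⁻¹ = tv i j hij (-c) := Units.ext rfl

lemma tv_closure (i j : Fin N) (hij : i ≠ j) (c : ℤ) :
    tv i j hij c ∈ Subgroup.closure (T N) := by
  induction c using Int.induction_on with
  | zero =>
      have h : tv i j hij 0 = 1 := Units.ext (by simp [tv])
      rw [h]; exact one_mem _
  | succ n ih =>
      rw [← tv_mul]
      exact mul_mem ih (Subgroup.subset_closure (tv_one_mem i j hij))
  | pred n ih =>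
      have h : (-(n : ℤ) - 1) = -(n : ℤ) + (-1) := by ring
      rw [h, ← tv_mul]
      refine mul_mem ih ?_
      rw [← tv_inv]
      exact inv_mem (Subgroup.subset_closure (tv_one_mem i j hij))

/-- signed swap matrix (also covers sign change when κ = i₀) -/
def swpM (κ i₀ : Fin N) (v : ℤ) : Matrix (Fin N) (Fin N) ℤ :=
  Matrix.of fun i j =>
    if i = κ then (if j = i₀ then v else 0)
    else if i = i₀ then (if j = κ then v else 0)
    else if i = j then 1 else 0

lemma swpM_mul_apply (κ i₀ : Fin N) (v : ℤ) (A : Matrix (Fin N) (Fin N) ℤ) (i j : Fin N) :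
    (swpM κ i₀ v * A) i j =
      if i = κ then v * A i₀ j else if i = i₀ then v * A κ j else A i j := by
  rw [Matrix.mul_apply]
  simp only [swpM, Matrix.of_apply]
  split_ifs with h1 h2
  · simp [ite_mul]
  · simp [ite_mul]
  · simp only [ite_mul, one_mul, zero_mul]
    rw [Finset.sum_ite_eq (Finset.univ) i (fun l => A l j)]
    simp

lemma swpM_sq (κ i₀ : Fin N) (v : ℤ) (hv : v = 1 ∨ v = -1) :
    swpM κ i₀ v * swpM κ i₀ v = 1 := by
  ext i j
  rw [swpM_mul_apply]
  simp only [swpM, Matrix.of_apply, Matrix.one_apply]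
  rcases hv with rfl | rfl <;>
    split_ifs <;> simp_all

/-- signed swap as a unit -/
def swpU (κ i₀ : Fin N) (v : ℤ) (hv : v = 1 ∨ v = -1) : GL (Fin N) ℤ :=
  ⟨swpM κ i₀ v, swpM κ i₀ v, swpM_sq κ i₀ v hv, swpM_sq κ i₀ v hv⟩

lemma swpU_mem (κ i₀ : Fin N) (v : ℤ) (hv : v = 1 ∨ v = -1) :
    swpU κ i₀ v hv ∈ T N := by
  intro i j
  show ((swpM κ i₀ v) i j).natAbs ≤ 1
  simp only [swpM, Matrix.of_apply]
  rcases hv with rfl | rfl <;> split_ifs <;> simp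

/-- first `k` rows and columns agree with the identity -/
def red (k : ℕ) (A : Matrix (Fin N) (Fin N) ℤ) : Prop :=
  ∀ i j : Fin N, (i.val < k ∨ j.val < k) → A i j = if i = j then 1 else 0

lemma inv_dot (A : GL (Fin N) ℤ) (κ : Fin N) :
    ∑ i, ((A⁻¹ : GL (Fin N) ℤ) : Matrix (Fin N) (Fin N) ℤ) κ i *
      (A : Matrix (Fin N) (Fin N) ℤ) i κ = 1 := by
  have h : ((A⁻¹ : GL (Fin N) ℤ) : Matrix (Fin N) (Fin N) ℤ) *
      (A : Matrix (Fin N) (Fin N) ℤ) = 1 := by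
    rw [← Units.val_mul, inv_mul_cancel, Units.val_one]
  calc ∑ i, ((A⁻¹ : GL (Fin N) ℤ) : Matrix (Fin N) (Fin N) ℤ) κ i *
        (A : Matrix (Fin N) (Fin N) ℤ) i κ
      = (((A⁻¹ : GL (Fin N) ℤ) : Matrix (Fin N) (Fin N) ℤ) *
        (A : Matrix (Fin N) (Fin N) ℤ)) κ κ := (Matrix.mul_apply).symm
    _ = 1 := by rw [h, Matrix.one_apply_eq]

lemma natAbs_emod_lt (a b : ℤ) (h : b ≠ 0) : (a % b).natAbs < b.natAbs := by
  have h1 : 0 ≤ a % b := Int.emod_nonneg a h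
  have h2 : a % b < (b.natAbs : ℤ) := by
    rcases h.lt_or_gt with hb | hb
    · have h3 := Int.emod_lt_of_pos a (b := -b) (by omega)
      rw [Int.emod_neg] at h3
      omega
    · have h3 := Int.emod_lt_of_pos a hb
      omega
  omega

lemma col_clean (k : ℕ) (hk : k < N) : ∀ m : ℕ, ∀ A : GL (Fin N) ℤ,
    red k (A : Matrix (Fin N) (Fin N) ℤ) →
    (∑ i, ((A : Matrix (Fin N) (Fin N) ℤ) i ⟨k, hk⟩).natAbs) ≤ m →
    ∃ B : GL (Fin N) ℤ, B ∈ Subgroup.closure (T N) ∧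
      red k ((B * A : GL (Fin N) ℤ) : Matrix (Fin N) (Fin N) ℤ) ∧
      ∀ i, ((B * A : GL (Fin N) ℤ) : Matrix (Fin N) (Fin N) ℤ) i ⟨k, hk⟩
        = if i = ⟨k, hk⟩ then 1 else 0 := by
  set κ : Fin N := ⟨k, hk⟩ with hκ
  intro m
  induction m with
  | zero =>
      intro A hred hsum
      exfalso
      have hz : ∀ i, (A : Matrix (Fin N) (Fin N) ℤ) i κ = 0 := by
        intro i
        have h2 := Finset.single_le_sum (f := fun i => ((A : Matrix (Fin N) (Fin N) ℤ) i κ).natAbs)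
          (fun i _ => Nat.zero_le _) (Finset.mem_univ i)
        omega
      have := inv_dot A κ
      simp only [hz, mul_zero, Finset.sum_const_zero] at this
      exact one_ne_zero this.symm
  | succ m ih =>
      intro A hred hsum
      -- some entry of the column is nonzero
      have hnz : ∃ i, (A : Matrix (Fin N) (Fin N) ℤ) i κ ≠ 0 := by
        by_contra hcon
        push_neg at hcon
        have := inv_dot A κ
        simp only [hcon, mul_zero, Finset.sum_const_zero] at this
        exact one_ne_zero this.symm
      obtain ⟨i₀, hi₀⟩ := hnz
      -- nonzero entries occur in rows ≥ k
      have hge : ∀ i : Fin N, (A : Matrix (Fin N) (Fin N) ℤ) i κ ≠ 0 → k ≤ i.val := by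
        intro i hi
        by_contra hlt
        push_neg at hlt
        have hiκ : i ≠ κ := by
          intro h; rw [h] at hlt; exact lt_irrefl _ hlt
        have := hred i κ (Or.inl hlt)
        rw [if_neg hiκ] at this
        exact hi this
      by_cases huniq : ∀ i : Fin N, (A : Matrix (Fin N) (Fin N) ℤ) i κ ≠ 0 → i = i₀
      · -- exactly one nonzero entry; it must be ±1
        have hzero : ∀ i : Fin N, i ≠ i₀ → (A : Matrix (Fin N) (Fin N) ℤ) i κ = 0 := by
          intro i hi
          by_contra hcon
          exact hi (huniq i hcon)
        have hsum1 : ∑ i, ((A⁻¹ : GL (Fin N) ℤ) : Matrix (Fin N) (Fin N) ℤ) κ i *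
            (A : Matrix (Fin N) (Fin N) ℤ) i κ
            = ((A⁻¹ : GL (Fin N) ℤ) : Matrix (Fin N) (Fin N) ℤ) κ i₀ *
              (A : Matrix (Fin N) (Fin N) ℤ) i₀ κ := by
          refine Finset.sum_eq_single i₀ (fun b _ hb => ?_) (by simp)
          rw [hzero b hb, mul_zero]
        have hunit : IsUnit ((A : Matrix (Fin N) (Fin N) ℤ) i₀ κ) := by
          refine IsUnit.of_mul_eq_one _ (?_ : _ * ((A⁻¹ : GL (Fin N) ℤ) : Matrix (Fin N) (Fin N) ℤ) κ i₀ = 1)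
          rw [mul_comm, ← hsum1, inv_dot]
        have hv : (A : Matrix (Fin N) (Fin N) ℤ) i₀ κ = 1 ∨
            (A : Matrix (Fin N) (Fin N) ℤ) i₀ κ = -1 := Int.isUnit_iff.mp hunit
        refine ⟨swpU κ i₀ _ hv, Subgroup.subset_closure (swpU_mem κ i₀ _ hv), ?_, ?_⟩
        · -- red is preserved
          intro i j hij
          have hBA : ((swpU κ i₀ _ hv * A : GL (Fin N) ℤ) : Matrix (Fin N) (Fin N) ℤ) i j =
              if i = κ then (A : Matrix (Fin N) (Fin N) ℤ) i₀ κ * (A : Matrix (Fin N) (Fin N) ℤ) i₀ j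
              else if i = i₀ then (A : Matrix (Fin N) (Fin N) ℤ) i₀ κ * (A : Matrix (Fin N) (Fin N) ℤ) κ j
              else (A : Matrix (Fin N) (Fin N) ℤ) i j := by
            rw [Units.val_mul]
            exact swpM_mul_apply κ i₀ _ _ i j
          rw [hBA]
          have hi₀k : k ≤ i₀.val := hge i₀ hi₀
          have hκval : κ.val = k := rfl
          by_cases h1 : i = κ
          · rw [if_pos h1]
            have h4 := congrArg Fin.val h1
            have hjk : j.val < k := by
              rcases hij with h | h
              · exfalso; omega
              · exact h
            have hi₀j : i₀ ≠ j := fun h => by have := congrArg Fin.val h; omega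
            have hij' : i ≠ j := fun h => by have := congrArg Fin.val h; omega
            rw [hred i₀ j (Or.inr hjk), if_neg hi₀j, mul_zero, if_neg hij']
          · rw [if_neg h1]
            by_cases h2 : i = i₀
            · rw [if_pos h2]
              have h4 := congrArg Fin.val h2
              have hjk : j.val < k := by
                rcases hij with h | h
                · exfalso; omega
                · exact h
              have hκj : κ ≠ j := fun h => by have := congrArg Fin.val h; omega
              have hij' : i ≠ j := fun h => by have := congrArg Fin.val h; omega
              rw [hred κ j (Or.inr hjk), if_neg hκj, mul_zero, if_neg hij']
            · rw [if_neg h2]; exact hred i j hij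
        · -- column κ becomes eκ
          intro i
          have hBA : ((swpU κ i₀ _ hv * A : GL (Fin N) ℤ) : Matrix (Fin N) (Fin N) ℤ) i κ =
              if i = κ then (A : Matrix (Fin N) (Fin N) ℤ) i₀ κ * (A : Matrix (Fin N) (Fin N) ℤ) i₀ κ
              else if i = i₀ then (A : Matrix (Fin N) (Fin N) ℤ) i₀ κ * (A : Matrix (Fin N) (Fin N) ℤ) κ κ
              else (A : Matrix (Fin N) (Fin N) ℤ) i κ := by
            rw [Units.val_mul]
            exact swpM_mul_apply κ i₀ _ _ i κ
          rw [hBA]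
          by_cases h1 : i = κ
          · rw [if_pos h1, if_pos h1]
            rcases hv with h | h <;> rw [h] <;> norm_num
          · rw [if_neg h1, if_neg h1]
            by_cases h2 : i = i₀
            · rw [if_pos h2]
              have hκi₀ : κ ≠ i₀ := fun h => h1 (h2.trans h.symm)
              rw [hzero κ hκi₀, mul_zero]
            · rw [if_neg h2]; exact hzero i h2
      · -- two distinct nonzero entries : euclidean step
        push_neg at huniq
        obtain ⟨i₁', hnz1, hne1⟩ := huniq
        -- order them by absolute value: p has the larger
        obtain ⟨p, q, hpq, hpnz, hqnz, hord⟩ :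
            ∃ p q : Fin N, p ≠ q ∧ (A : Matrix (Fin N) (Fin N) ℤ) p κ ≠ 0 ∧
              (A : Matrix (Fin N) (Fin N) ℤ) q κ ≠ 0 ∧
              ((A : Matrix (Fin N) (Fin N) ℤ) q κ).natAbs ≤
                ((A : Matrix (Fin N) (Fin N) ℤ) p κ).natAbs := by
          rcases le_total ((A : Matrix (Fin N) (Fin N) ℤ) i₁' κ).natAbs
              ((A : Matrix (Fin N) (Fin N) ℤ) i₀ κ).natAbs with h | h
          · exact ⟨i₀, i₁', fun h' => hne1 h'.symm, hi₀, hnz1, h⟩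
          · exact ⟨i₁', i₀, hne1, hnz1, hi₀, h⟩
        set aa := (A : Matrix (Fin N) (Fin N) ℤ) p κ with haa
        set b := (A : Matrix (Fin N) (Fin N) ℤ) q κ with hb
        set c : ℤ := -(aa / b) with hc
        set B' := tv p q hpq c with hB'
        have hval : ∀ i j : Fin N, ((B' * A : GL (Fin N) ℤ) : Matrix (Fin N) (Fin N) ℤ) i j =
            if i = p then (A : Matrix (Fin N) (Fin N) ℤ) p j + c * (A : Matrix (Fin N) (Fin N) ℤ) q j
            else (A : Matrix (Fin N) (Fin N) ℤ) i j := by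
          intro i j
          rw [Units.val_mul]
          show (transvection p q c * (A : Matrix (Fin N) (Fin N) ℤ)) i j = _
          split_ifs with h
          · rw [h]; exact transvection_mul_apply_same p q j c _
          · exact transvection_mul_apply_of_ne p q i j h c _
        have hmod : aa + c * b = aa % b := by
          rw [hc, Int.emod_def]; ring
        have hred' : red k ((B' * A : GL (Fin N) ℤ) : Matrix (Fin N) (Fin N) ℤ) := by
          intro i j hij
          rw [hval]
          by_cases h1 : i = p
          · rw [if_pos h1]
            have hpk : k ≤ p.val := hge p hpnz
            have hqk : k ≤ q.val := hge q hqnz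
            have h4 := congrArg Fin.val h1
            have hjk : j.val < k := by
              rcases hij with h | h
              · exfalso; omega
              · exact h
            have hpj : p ≠ j := fun h => by have := congrArg Fin.val h; omega
            have hqj : q ≠ j := fun h => by have := congrArg Fin.val h; omega
            have hij' : i ≠ j := fun h => by have := congrArg Fin.val h; omega
            rw [hred p j (Or.inr hjk), hred q j (Or.inr hjk), if_neg hpj, if_neg hqj,
              mul_zero, add_zero, if_neg hij']
          · rw [if_neg h1]; exact hred i j hij
        have hsum' : (∑ i, (((B' * A : GL (Fin N) ℤ) : Matrix (Fin N) (Fin N) ℤ) i κ).natAbs) ≤ m := by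
          have hlt : (∑ i, (((B' * A : GL (Fin N) ℤ) : Matrix (Fin N) (Fin N) ℤ) i κ).natAbs) <
              ∑ i, ((A : Matrix (Fin N) (Fin N) ℤ) i κ).natAbs := by
            refine Finset.sum_lt_sum (fun i _ => ?_) ⟨p, Finset.mem_univ p, ?_⟩
            · rw [hval]
              split_ifs with h
              · rw [h, hmod]
                have := natAbs_emod_lt aa b hqnz
                omega
              · exact le_rfl
            · rw [hval, if_pos rfl, hmod]
              have := natAbs_emod_lt aa b hqnz
              omega
          omega
        obtain ⟨B'', hB''cl, hred'', hcol''⟩ := ih (B' * A) hred' hsum'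
        refine ⟨B'' * B', mul_mem hB''cl (tv_closure p q hpq c), ?_, ?_⟩
        · rw [mul_assoc]; exact hred''
        · rw [mul_assoc]; exact hcol''

lemma row_clean (k : ℕ) (hk : k < N) : ∀ m : ℕ, ∀ A : GL (Fin N) ℤ,
    red k (A : Matrix (Fin N) (Fin N) ℤ) →
    (∀ i, (A : Matrix (Fin N) (Fin N) ℤ) i ⟨k, hk⟩ = if i = ⟨k, hk⟩ then 1 else 0) →
    (Finset.univ.filter
      (fun j : Fin N => j ≠ ⟨k, hk⟩ ∧ (A : Matrix (Fin N) (Fin N) ℤ) ⟨k, hk⟩ j ≠ 0)).card ≤ m →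
    ∃ C : GL (Fin N) ℤ, C ∈ Subgroup.closure (T N) ∧
      red (k + 1) ((A * C : GL (Fin N) ℤ) : Matrix (Fin N) (Fin N) ℤ) := by
  set κ : Fin N := ⟨k, hk⟩ with hκ
  have hκval : κ.val = k := rfl
  intro m
  induction m with
  | zero =>
      intro A hred hcol hcard
      refine ⟨1, one_mem _, ?_⟩
      have hA : ((A * 1 : GL (Fin N) ℤ) : Matrix (Fin N) (Fin N) ℤ)
          = (A : Matrix (Fin N) (Fin N) ℤ) := by rw [mul_one]
      rw [hA]
      have hrow : ∀ j : Fin N, j ≠ κ → (A : Matrix (Fin N) (Fin N) ℤ) κ j = 0 := by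
        intro j hj
        by_contra hcon
        have : j ∈ Finset.univ.filter
            (fun j : Fin N => j ≠ κ ∧ (A : Matrix (Fin N) (Fin N) ℤ) κ j ≠ 0) :=
          Finset.mem_filter.mpr ⟨Finset.mem_univ j, hj, hcon⟩
        have := Finset.card_pos.mpr ⟨j, this⟩
        omega
      intro i j hij
      by_cases h1 : i.val < k ∨ j.val < k
      · exact hred i j h1
      · push_neg at h1
        obtain ⟨h1a, h1b⟩ := h1
        rcases hij with h | h
        · -- i.val = k, so i = κ
          have hiκ : i = κ := Fin.ext (by omega)
          by_cases h2 : j = κ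
          · rw [hiκ, h2]; exact hcol κ
          · rw [hiκ, hrow j h2, if_neg (fun h => h2 (Eq.symm h))]
        · -- j = κ
          have hjκ : j = κ := Fin.ext (by omega)
          rw [hjκ, hcol i]
  | succ m ih =>
      intro A hred hcol hcard
      by_cases hemp : (Finset.univ.filter
          (fun j : Fin N => j ≠ κ ∧ (A : Matrix (Fin N) (Fin N) ℤ) κ j ≠ 0)).card = 0
      · exact ih A hred hcol (by omega)
      · have hne : (Finset.univ.filter
            (fun j : Fin N => j ≠ κ ∧ (A : Matrix (Fin N) (Fin N) ℤ) κ j ≠ 0)).Nonempty :=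
          Finset.card_pos.mp (by omega)
        obtain ⟨j₀, hj₀⟩ := hne
        obtain ⟨-, hj₀κ, hj₀nz⟩ := Finset.mem_filter.mp hj₀
        have hκj₀ : κ ≠ j₀ := fun h => hj₀κ h.symm
        set c : ℤ := -((A : Matrix (Fin N) (Fin N) ℤ) κ j₀) with hc
        set C' := tv κ j₀ hκj₀ c with hC'
        have hval : ∀ i j : Fin N, ((A * C' : GL (Fin N) ℤ) : Matrix (Fin N) (Fin N) ℤ) i j =
            if j = j₀ then (A : Matrix (Fin N) (Fin N) ℤ) i j₀ + c * (A : Matrix (Fin N) (Fin N) ℤ) i κ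
            else (A : Matrix (Fin N) (Fin N) ℤ) i j := by
          intro i j
          rw [Units.val_mul]
          show ((A : Matrix (Fin N) (Fin N) ℤ) * transvection κ j₀ c) i j = _
          split_ifs with h
          · rw [h]; exact mul_transvection_apply_same κ j₀ i c _
          · exact mul_transvection_apply_of_ne κ j₀ i j h c _
        have hj₀k : k ≤ j₀.val := by
          by_contra hlt
          push_neg at hlt
          have := hred κ j₀ (Or.inr hlt)
          rw [if_neg hκj₀] at this
          exact hj₀nz this
        -- red is preserved
        have hred' : red k ((A * C' : GL (Fin N) ℤ) : Matrix (Fin N) (Fin N) ℤ) := by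
          intro i j hij
          rw [hval]
          by_cases h1 : j = j₀
          · rw [if_pos h1]
            have h4 := congrArg Fin.val h1
            have hik : i.val < k := by
              rcases hij with h | h
              · exact h
              · exfalso; omega
            have hij₀ : i ≠ j₀ := fun h => by have := congrArg Fin.val h; omega
            have hiκ : i ≠ κ := fun h => by have := congrArg Fin.val h; omega
            have hij' : i ≠ j := fun h => by have := congrArg Fin.val h; omega
            rw [hred i j₀ (Or.inl hik), hred i κ (Or.inl hik), if_neg hij₀, if_neg hiκ,
              mul_zero, add_zero, if_neg hij']
          · rw [if_neg h1]; exact hred i j hij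
        -- column κ is preserved
        have hcol' : ∀ i, ((A * C' : GL (Fin N) ℤ) : Matrix (Fin N) (Fin N) ℤ) i κ
            = if i = κ then 1 else 0 := by
          intro i
          rw [hval, if_neg hκj₀]
          exact hcol i
        -- the filter shrinks
        have hcard' : (Finset.univ.filter
            (fun j : Fin N => j ≠ κ ∧
              ((A * C' : GL (Fin N) ℤ) : Matrix (Fin N) (Fin N) ℤ) κ j ≠ 0)).card ≤ m := by
          have hsub : Finset.univ.filter
              (fun j : Fin N => j ≠ κ ∧
                ((A * C' : GL (Fin N) ℤ) : Matrix (Fin N) (Fin N) ℤ) κ j ≠ 0) ⊆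
              (Finset.univ.filter
                (fun j : Fin N => j ≠ κ ∧ (A : Matrix (Fin N) (Fin N) ℤ) κ j ≠ 0)).erase j₀ := by
            intro j hj
            obtain ⟨-, hjκ, hjnz⟩ := Finset.mem_filter.mp hj
            rw [hval] at hjnz
            by_cases h1 : j = j₀
            · exfalso
              rw [if_pos h1] at hjnz
              have hκκ := hcol κ
              rw [if_pos rfl] at hκκ
              apply hjnz
              rw [hκκ, hc]; ring
            · rw [if_neg h1] at hjnz
              exact Finset.mem_erase.mpr ⟨h1, Finset.mem_filter.mpr ⟨Finset.mem_univ j, hjκ, hjnz⟩⟩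
          have := Finset.card_le_card hsub
          have := Finset.card_erase_of_mem hj₀
          omega
        obtain ⟨C'', hC''cl, hred''⟩ := ih (A * C') hred' hcol' hcard'
        refine ⟨C' * C'', mul_mem (tv_closure κ j₀ hκj₀ c) hC''cl, ?_⟩
        rw [← mul_assoc]
        exact hred''

lemma main_lemma : ∀ d k : ℕ, N - k ≤ d → ∀ A : GL (Fin N) ℤ,
    red k (A : Matrix (Fin N) (Fin N) ℤ) → A ∈ Subgroup.closure (T N) := by
  intro d
  induction d with
  | zero =>
      intro k hd A hred
      have hNk : N ≤ k := by omega
      have hA : A = 1 := by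
        refine Units.ext (Matrix.ext fun i j => ?_)
        rw [hred i j (Or.inl (lt_of_lt_of_le i.isLt hNk)), Units.val_one, Matrix.one_apply]
      rw [hA]; exact one_mem _
  | succ d ihd =>
      intro k hd A hred
      by_cases hk : k < N
      · obtain ⟨B, hBcl, hredB, hcolB⟩ :=
          col_clean k hk (∑ i, ((A : Matrix (Fin N) (Fin N) ℤ) i ⟨k, hk⟩).natAbs) A hred le_rfl
        obtain ⟨C, hCcl, hredC⟩ :=
          row_clean k hk (Finset.univ.filter
            (fun j : Fin N => j ≠ ⟨k, hk⟩ ∧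
              ((B * A : GL (Fin N) ℤ) : Matrix (Fin N) (Fin N) ℤ) ⟨k, hk⟩ j ≠ 0)).card
            (B * A) hredB hcolB le_rfl
        have hmem : B * A * C ∈ Subgroup.closure (T N) :=
          ihd (k + 1) (by omega) (B * A * C) hredC
        have hA : A = B⁻¹ * (B * A * C) * C⁻¹ := by group
        rw [hA]
        exact mul_mem (mul_mem (inv_mem hBcl) hmem) (inv_mem hCcl)
      · have hA : A = 1 := by
          refine Units.ext (Matrix.ext fun i j => ?_)
          rw [hred i j (Or.inl (lt_of_lt_of_le i.isLt (by omega))), Units.val_one, Matrix.one_apply]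
        rw [hA]; exact one_mem _

end Stmt14

/-- For every positive `N`, the group `GL_N(ℤ)` is finitely generated:
there is a finite subset `S` of `GL_N(ℤ)` generating the whole group. -/
theorem stmt_14 (N : ℕ) (hN : 0 < N) :
    ∃ S : Set (GL (Fin N) ℤ), S.Finite ∧ Subgroup.closure S = ⊤ := by
  refine ⟨Stmt14.T N, Stmt14.T_finite N, ?_⟩
  rw [eq_top_iff]
  intro A _
  refine Stmt14.main_lemma N 0 (by omega) A ?_
  intro i j hij
  rcases hij with h | h <;> exact absurd h (Nat.not_lt_zero _)
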